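/- For permutations σ < π in the classical permutation pattern order, with σ of length m and π of length n, μ(σ,π) = (−1)^{n−m} · E(σ,π) + Σ_{λ : σ ≤ λ < π} μ(σ,λ) · μ(0̂,1̂), where the second factor in each summand is the Möbius function of the bounded poset Â*(λ,π), and the sum is over all permutations λ with σ ≤ λ ≤ π and λ ≠ π. -/

import Mathlib

attribute [local instance] Classical.propDecidable

noncomputable instance {α : Type*} [Fintype α] : Fintype (WithBot α) :=
  inferInstanceAs (Fintype (Option α))
noncomputable instance {α : Type*} [Fintype α] : Fintype (WithTop α) :=
  inferInstanceAs (Fintype (Option α))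

/-- The Möbius function of a finite partial order. -/
noncomputable def mob {α : Type*} [Preorder α] [Fintype α] (a b : α) : ℤ :=
  letI := Classical.decEq α
  letI : @DecidableRel α α (· ≤ ·) := Classical.decRel _
  letI : @DecidableRel α α (· < ·) := Classical.decRel _
  letI : LocallyFiniteOrder α := Fintype.toLocallyFiniteOrder
  IncidenceAlgebra.mu ℤ a b

/-- The bounded poset obtained by adjoining a new minimum `0̂` and maximum `1̂`. -/
abbrev Bd (α : Type*) := WithBot (WithTop α)

/-- The Möbius number `μ(0̂,1̂)` of a finite poset with a new minimum and maximum adjoined. -/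
noncomputable def mobHat (α : Type*) [Preorder α] [Fintype α] : ℤ :=
  mob (⊥ : Bd α) ⊤

/-- Classical pattern containment for (reduced) permutations. -/
def PermLE {m n : ℕ} (σ : Equiv.Perm (Fin m)) (π : Equiv.Perm (Fin n)) : Prop :=
  ∃ f : Fin m → Fin n, StrictMono f ∧ ∀ i j : Fin m, σ i < σ j ↔ π (f i) < π (f j)

/-- Strict classical pattern containment. -/
def PermLT {m n : ℕ} (σ : Equiv.Perm (Fin m)) (π : Equiv.Perm (Fin n)) : Prop :=
  PermLE σ π ∧ ¬ PermLE π σ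

/-- `red π S` is the permutation of length `S.card` order-isomorphic to `π`
restricted to the set of positions `S`. -/
noncomputable def red {n : ℕ} (π : Equiv.Perm (Fin n)) (S : Finset (Fin n)) :
    Equiv.Perm (Fin S.card) := by
  classical
  have hcard : (S.image fun x => π x).card = S.card :=
    Finset.card_image_of_injective _ π.injective
  refine Equiv.ofBijective (fun i =>
    ((S.image fun x => π x).orderIsoOfFin hcard).symm
      ⟨π (S.orderIsoOfFin rfl i), Finset.mem_image_of_mem _ (S.orderIsoOfFin rfl i).2⟩)
    (Finite.injective_iff_bijective.mp ?_)
  intro i j hij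
  have h2 := congrArg (fun z => ((((S.image fun x => π x).orderIsoOfFin hcard) z : Fin n)))
    hij
  simp only [OrderIso.apply_symm_apply] at h2
  have h4 := π.injective h2
  have h5 : (S.orderIsoOfFin rfl) i = (S.orderIsoOfFin rfl) j := Subtype.ext h4
  exact (S.orderIsoOfFin rfl).injective h5

/-- `S` is an embedding (occurrence set) of `σ` in `π`, i.e. `red(π|_S) = σ`. -/
def IsEmb {n m : ℕ} (π : Equiv.Perm (Fin n)) (S : Finset (Fin n))
    (σ : Equiv.Perm (Fin m)) : Prop :=
  ∃ h : S.card = m, ∀ i : Fin S.card, (red π S i : ℕ) = (σ (Fin.cast h i) : ℕ)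

/-- `E(σ,π)`: the number of embeddings of `σ` in `π`. -/
noncomputable def permE {m n : ℕ} (σ : Equiv.Perm (Fin m)) (π : Equiv.Perm (Fin n)) : ℕ :=
  (Finset.univ.filter fun S : Finset (Fin n) => IsEmb π S σ).card

/-- The poset `A*(λ,π)` of proper position sets `S ⊊ Fin n` with `λ ≤ red(π|_S)`,
ordered by inclusion. -/
abbrev AstarP {n k : ℕ} (π : Equiv.Perm (Fin n)) (lam : Equiv.Perm (Fin k)) :=
  {S : Finset (Fin n) // S ≠ Finset.univ ∧ PermLE lam (red π S)}

/-- The predecessor position. -/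
def predPos {n : ℕ} (p : Fin n) : Fin n :=
  ⟨p.1 - 1, lt_of_le_of_lt (Nat.sub_le p.1 1) p.2⟩

/-- `p` lies in the tail of an adjacency of `π`: `p` is not the first position and the
values of `π` at `p−1` and `p` differ by exactly one (consecutive positions in a maximal
block on which the values increase by exactly 1 at each step or decrease by exactly 1 at
each step). -/
def tailPos {n : ℕ} (π : Equiv.Perm (Fin n)) (p : Fin n) : Prop :=
  0 < p.1 ∧ ((π p : ℕ) = (π (predPos p) : ℕ) + 1 ∨ (π (predPos p) : ℕ) = (π p : ℕ) + 1)

/-- A normal embedding: an embedding containing every position in the tail of an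
adjacency of `π`. -/
def IsNormalEmb {n m : ℕ} (π : Equiv.Perm (Fin n)) (S : Finset (Fin n))
    (σ : Equiv.Perm (Fin m)) : Prop :=
  IsEmb π S σ ∧ ∀ p : Fin n, tailPos π p → p ∈ S

/-- `NE(σ,π)`: the number of normal embeddings of `σ` in `π`. -/
noncomputable def permNE {m n : ℕ} (σ : Equiv.Perm (Fin m)) (π : Equiv.Perm (Fin n)) : ℕ :=
  (Finset.univ.filter fun S : Finset (Fin n) => IsNormalEmb π S σ).card

/-- A set of positions is representative if within every adjacency of `π` its positions
form a suffix of the adjacency. -/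
def ReprP {n : ℕ} (π : Equiv.Perm (Fin n)) (S : Finset (Fin n)) : Prop :=
  ∀ p : Fin n, tailPos π p → predPos p ∈ S → p ∈ S

/-- The poset `R*(λ,π)` of representative proper position sets `S ⊊ Fin n` with
`λ ≤ red(π|_S)`, ordered by inclusion. -/
abbrev RstarP {n k : ℕ} (π : Equiv.Perm (Fin n)) (lam : Equiv.Perm (Fin k)) :=
  {S : Finset (Fin n) // S ≠ Finset.univ ∧ ReprP π S ∧ PermLE lam (red π S)}

section PermBasics

open Finset

variable {m n k c : ℕ}

/-- Two permutations of `Fin c` with the same order comparisons are equal. -/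
lemma perm_eq_of_lt_iff {c : ℕ} (α β : Equiv.Perm (Fin c))
    (h : ∀ i j, α i < α j ↔ β i < β j) : α = β := by
  haveI : WellFoundedLT (Fin c) := inferInstance
  have hsm : StrictMono (fun i => β (α.symm i)) := by
    intro a b hab
    exact (h (α.symm a) (α.symm b)).mp (by simpa using hab)
  have hr : Set.range (fun i => β (α.symm i)) = Set.range (id : Fin c → Fin c) := by
    rw [Set.range_id]
    exact Set.range_eq_univ.mpr ((β.surjective).comp α.symm.surjective)
  have hid := (hsm.range_inj strictMono_id).mp hr
  ext i
  have := congrFun hid (α i)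
  exact congrArg Fin.val (by simpa using this.symm)

lemma perm_val_eq_of_lt_iff {c c' : ℕ} (hc : c = c') (α : Equiv.Perm (Fin c))
    (β : Equiv.Perm (Fin c'))
    (h : ∀ i j : Fin c, α i < α j ↔ β (Fin.cast hc i) < β (Fin.cast hc j)) :
    ∀ i, (α i : ℕ) = (β (Fin.cast hc i) : ℕ) := by
  subst hc
  have : α = β := perm_eq_of_lt_iff α β (by simpa using h)
  subst this
  simp

lemma perm_heq_of_val_eq {c c' : ℕ} (hc : c = c') (α : Equiv.Perm (Fin c))
    (β : Equiv.Perm (Fin c')) (h : ∀ i, (α i : ℕ) = (β (Fin.cast hc i) : ℕ)) :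
    HEq α β := by
  subst hc
  have : α = β := by
    ext i
    simpa using h i
  exact heq_of_eq this

/-- Characterisation of `red` by comparisons. -/
lemma red_lt_iff (π : Equiv.Perm (Fin n)) (S : Finset (Fin n)) (i j : Fin S.card) :
    red π S i < red π S j ↔ π (S.orderEmbOfFin rfl i) < π (S.orderEmbOfFin rfl j) := by
  unfold red
  rw [Equiv.ofBijective_apply, Equiv.ofBijective_apply, OrderIso.lt_iff_lt]
  rw [Subtype.mk_lt_mk]
  rw [Finset.coe_orderIsoOfFin_apply, Finset.coe_orderIsoOfFin_apply]

/-- `Pat σ π g` : `g` is an occurrence of the pattern `σ` in `π`. -/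
def Pat {m n : ℕ} (σ : Equiv.Perm (Fin m)) (π : Equiv.Perm (Fin n))
    (g : Fin m → Fin n) : Prop :=
  StrictMono g ∧ ∀ i j, σ i < σ j ↔ π (g i) < π (g j)

lemma permLE_iff {σ : Equiv.Perm (Fin m)} {π : Equiv.Perm (Fin n)} :
    PermLE σ π ↔ ∃ g, Pat σ π g := Iff.rfl

lemma pat_comp {σ : Equiv.Perm (Fin m)} {π : Equiv.Perm (Fin n)} {lam : Equiv.Perm (Fin k)}
    {g : Fin m → Fin n} {g' : Fin k → Fin m} (h : Pat σ π g) (h' : Pat lam σ g') :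
    Pat lam π (g ∘ g') :=
  ⟨h.1.comp h'.1, fun i j => (h'.2 i j).trans (h.2 (g' i) (g' j))⟩

lemma permLE_refl (σ : Equiv.Perm (Fin m)) : PermLE σ σ :=
  ⟨id, strictMono_id, fun _ _ => Iff.rfl⟩

lemma permLE_trans {σ : Equiv.Perm (Fin m)} {π : Equiv.Perm (Fin n)} {lam : Equiv.Perm (Fin k)}
    (h' : PermLE lam σ) (h : PermLE σ π) : PermLE lam π := by
  obtain ⟨g, hg⟩ := h
  obtain ⟨g', hg'⟩ := h'
  exact ⟨g ∘ g', pat_comp hg hg'⟩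

lemma pat_card_le {σ : Equiv.Perm (Fin m)} {π : Equiv.Perm (Fin n)} {g : Fin m → Fin n}
    (h : Pat σ π g) : m ≤ n := by
  have := Fintype.card_le_of_injective g h.1.injective
  simpa using this

lemma permLE_card_le {σ : Equiv.Perm (Fin m)} {π : Equiv.Perm (Fin n)}
    (h : PermLE σ π) : m ≤ n := by
  obtain ⟨g, hg⟩ := h
  exact pat_card_le hg

/-- Bridge between `IsEmb` and pattern occurrences. -/
lemma isEmb_iff_pat (π : Equiv.Perm (Fin n)) (S : Finset (Fin n)) (σ : Equiv.Perm (Fin m)) :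
    IsEmb π S σ ↔ ∃ g, Pat σ π g ∧ Finset.image g Finset.univ = S := by
  constructor
  · rintro ⟨hc, hval⟩
    refine ⟨fun i => S.orderEmbOfFin hc i, ⟨(S.orderEmbOfFin hc).strictMono, ?_⟩, ?_⟩
    · intro i j
      have hemb : ∀ i : Fin m,
          S.orderEmbOfFin rfl (Fin.cast hc.symm i) = S.orderEmbOfFin hc i := by
        intro i
        have := Finset.orderEmbOfFin_unique (f := fun i : Fin m =>
            S.orderEmbOfFin rfl (Fin.cast hc.symm i)) hc
          (fun i => Finset.orderEmbOfFin_mem S rfl _)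
          ((S.orderEmbOfFin rfl).strictMono.comp (Fin.cast_strictMono _))
        exact (congrFun this i)
      have hlt := red_lt_iff π S (Fin.cast hc.symm i) (Fin.cast hc.symm j)
      have hvi := hval (Fin.cast hc.symm i)
      have hvj := hval (Fin.cast hc.symm j)
      simp only [Fin.cast_cast, Fin.cast_eq_self] at hvi hvj
      rw [hemb i, hemb j] at hlt
      constructor
      · intro hij
        rw [← hlt]
        rw [Fin.lt_iff_val_lt_val] at hij ⊢
        omega
      · intro hij
        rw [← hlt] at hij
        rw [Fin.lt_iff_val_lt_val] at hij ⊢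
        omega
    · apply Finset.coe_injective
      rw [Finset.coe_image, Finset.coe_univ, Set.image_univ]
      have := Finset.range_orderEmbOfFin S hc
      exact this
  · rintro ⟨g, ⟨hsm, hcmp⟩, himg⟩
    have hc : S.card = m := by
      rw [← himg, Finset.card_image_of_injective _ hsm.injective]
      simp
    refine ⟨hc, ?_⟩
    have hemb : ∀ i : Fin S.card, S.orderEmbOfFin rfl i = g (Fin.cast hc i) := by
      intro i
      have := Finset.orderEmbOfFin_unique (f := fun i : Fin S.card => g (Fin.cast hc i))
        (rfl : S.card = S.card)
        (fun i => by
          have hmem : g (Fin.cast hc i) ∈ Finset.image g Finset.univ :=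
            Finset.mem_image_of_mem _ (Finset.mem_univ _)
          rwa [himg] at hmem)
        (hsm.comp (Fin.cast_strictMono _))
      exact (congrFun this i).symm
    apply perm_val_eq_of_lt_iff hc (red π S) σ
    intro i j
    rw [red_lt_iff, hemb i, hemb j]
    exact (hcmp _ _).symm

lemma isEmb_card {π : Equiv.Perm (Fin n)} {S : Finset (Fin n)} {σ : Equiv.Perm (Fin m)}
    (h : IsEmb π S σ) : S.card = m := h.1

lemma permLE_of_isEmb {π : Equiv.Perm (Fin n)} {S : Finset (Fin n)} {σ : Equiv.Perm (Fin m)}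
    (h : IsEmb π S σ) : PermLE σ π := by
  obtain ⟨g, hg, -⟩ := (isEmb_iff_pat π S σ).mp h
  exact ⟨g, hg⟩

lemma red_pat (π : Equiv.Perm (Fin n)) (S : Finset (Fin n)) :
    Pat (red π S) π (fun i => S.orderEmbOfFin rfl i) :=
  ⟨(S.orderEmbOfFin rfl).strictMono, fun i j => red_lt_iff π S i j⟩

lemma red_permLE (π : Equiv.Perm (Fin n)) (S : Finset (Fin n)) :
    PermLE (red π S) π := ⟨_, red_pat π S⟩

lemma isEmb_red_self (π : Equiv.Perm (Fin n)) (S : Finset (Fin n)) :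
    IsEmb π S (red π S) := ⟨rfl, fun i => rfl⟩

/-- `λ ≤ red(π|S)` iff some subset of `S` is an embedding of `λ`. -/
lemma permLE_red_iff {lam : Equiv.Perm (Fin k)} {π : Equiv.Perm (Fin n)} {S : Finset (Fin n)} :
    PermLE lam (red π S) ↔ ∃ T, T ⊆ S ∧ IsEmb π T lam := by
  constructor
  · rintro ⟨g, hg⟩
    have hp : Pat lam π ((fun i => S.orderEmbOfFin rfl i) ∘ g) := pat_comp (red_pat π S) hg
    refine ⟨Finset.image ((fun i => S.orderEmbOfFin rfl i) ∘ g) Finset.univ, ?_, ?_⟩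
    · intro x hx
      simp only [Finset.mem_image] at hx
      obtain ⟨i, -, rfl⟩ := hx
      exact Finset.orderEmbOfFin_mem S rfl _
    · exact (isEmb_iff_pat _ _ _).mpr ⟨_, hp, rfl⟩
  · rintro ⟨T, hTS, hemb⟩
    obtain ⟨g, ⟨hsm, hcmp⟩, himg⟩ := (isEmb_iff_pat π T lam).mp hemb
    refine ⟨fun i => (S.orderIsoOfFin rfl).symm ⟨g i, hTS (himg ▸ Finset.mem_image_of_mem _
      (Finset.mem_univ i))⟩, ?_, ?_⟩
    · intro a b hab
      apply (OrderIso.lt_iff_lt _).mpr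
      exact Subtype.mk_lt_mk.mpr (hsm hab)
    · intro i j
      rw [red_lt_iff]
      have he : ∀ i, S.orderEmbOfFin rfl ((S.orderIsoOfFin rfl).symm
          ⟨g i, hTS (himg ▸ Finset.mem_image_of_mem _ (Finset.mem_univ i))⟩) = g i := by
        intro i
        rw [← Finset.coe_orderIsoOfFin_apply, OrderIso.apply_symm_apply]
      rw [he i, he j]
      exact hcmp i j

lemma permLE_val_of_eq_len {σ : Equiv.Perm (Fin m)} {π : Equiv.Perm (Fin n)}
    (hc : m = n) (h : PermLE σ π) : ∀ i, (σ i : ℕ) = (π (Fin.cast hc i) : ℕ) := by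
  subst hc
  obtain ⟨g, hsm, hcmp⟩ := h
  haveI : WellFoundedLT (Fin m) := inferInstance
  have hr : Set.range g = Set.range (id : Fin m → Fin m) := by
    rw [Set.range_id]
    exact Set.range_eq_univ.mpr (Finite.surjective_of_injective hsm.injective)
  have hid := (hsm.range_inj strictMono_id).mp hr
  have hse : σ = π := by
    apply perm_eq_of_lt_iff
    intro i j
    rw [hcmp i j, congrFun hid i, congrFun hid j]
    rfl
  subst hse
  simp

lemma permLE_symm_of_eq_len {σ : Equiv.Perm (Fin m)} {π : Equiv.Perm (Fin n)}
    (hc : m = n) (h : PermLE σ π) : PermLE π σ := by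
  subst hc
  have hv := permLE_val_of_eq_len rfl h
  simp only [Fin.cast_refl, id_eq] at hv
  have hse : σ = π := by
    ext i
    simpa using hv i
  subst hse
  exact permLE_refl σ

lemma permLE_heq_of_eq_len {σ : Equiv.Perm (Fin m)} {π : Equiv.Perm (Fin n)}
    (hc : m = n) (h : PermLE σ π) : HEq σ π :=
  perm_heq_of_val_eq hc σ π (permLE_val_of_eq_len hc h)

end PermBasics

section RedComp

open Finset

variable {m n k c : ℕ}

lemma card_image_emb {n : ℕ} (S : Finset (Fin n)) (U : Finset (Fin S.card)) :
    (U.image (fun i => S.orderEmbOfFin rfl i)).card = U.card :=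
  Finset.card_image_of_injective _ (S.orderEmbOfFin rfl).injective

/-- Composition law for `red`: restricting twice equals restricting to the image once. -/
lemma red_red_val (π : Equiv.Perm (Fin n)) (S : Finset (Fin n)) (U : Finset (Fin S.card)) :
    ∀ i, ((red π (U.image (fun i => S.orderEmbOfFin rfl i))) i : ℕ) =
      (red (red π S) U (Fin.cast (card_image_emb S U) i) : ℕ) := by
  set T := U.image (fun i => S.orderEmbOfFin rfl i) with hT
  apply perm_val_eq_of_lt_iff (card_image_emb S U) (red π T) (red (red π S) U)
  intro i j
  have hemb : ∀ i : Fin T.card, T.orderEmbOfFin rfl i =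
      S.orderEmbOfFin rfl (U.orderEmbOfFin rfl (Fin.cast (card_image_emb S U) i)) := by
    intro i
    have := Finset.orderEmbOfFin_unique (f := fun i : Fin T.card =>
        S.orderEmbOfFin rfl (U.orderEmbOfFin rfl (Fin.cast (card_image_emb S U) i)))
      (rfl : T.card = T.card)
      (fun i => Finset.mem_image_of_mem _ (Finset.orderEmbOfFin_mem U rfl _))
      ((S.orderEmbOfFin rfl).strictMono.comp
        ((U.orderEmbOfFin rfl).strictMono.comp (Fin.cast_strictMono _)))
    exact (congrFun this i).symm
  rw [red_lt_iff, red_lt_iff, red_lt_iff, hemb i, hemb j]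

lemma isEmb_image_iff (π : Equiv.Perm (Fin n)) (S : Finset (Fin n)) (U : Finset (Fin S.card))
    (σ : Equiv.Perm (Fin m)) :
    IsEmb π (U.image (fun i => S.orderEmbOfFin rfl i)) σ ↔ IsEmb (red π S) U σ := by
  set T := U.image (fun i => S.orderEmbOfFin rfl i) with hT
  have hcc : T.card = U.card := card_image_emb S U
  have hval := red_red_val π S U
  constructor
  · rintro ⟨hc, hv⟩
    refine ⟨hcc ▸ hc, ?_⟩
    intro i
    have := hv (Fin.cast hcc.symm i)
    rw [hval (Fin.cast hcc.symm i)] at this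
    simpa using this
  · rintro ⟨hc, hv⟩
    refine ⟨hcc.trans hc, ?_⟩
    intro i
    rw [hval i]
    have := hv (Fin.cast hcc i)
    simpa using this

lemma permLE_congr_right {lam : Equiv.Perm (Fin k)} {c c' : ℕ} (hc : c = c')
    (ρ : Equiv.Perm (Fin c)) (ρ' : Equiv.Perm (Fin c'))
    (h : ∀ i, (ρ i : ℕ) = (ρ' (Fin.cast hc i) : ℕ)) :
    PermLE lam ρ ↔ PermLE lam ρ' := by
  subst hc
  have : ρ = ρ' := by
    ext i
    simpa using h i
  rw [this]

lemma mobHat_Astar_congr {k : ℕ} (lam : Equiv.Perm (Fin k)) {c c' : ℕ} (hc : c = c')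
    (ρ : Equiv.Perm (Fin c)) (ρ' : Equiv.Perm (Fin c'))
    (h : ∀ i, (ρ i : ℕ) = (ρ' (Fin.cast hc i) : ℕ)) :
    mobHat (AstarP ρ lam) = mobHat (AstarP ρ' lam) := by
  subst hc
  have : ρ = ρ' := by
    ext i
    simpa using h i
  rw [this]

lemma mem_iff_emb {n : ℕ} (S : Finset (Fin n)) (x : Fin n) :
    x ∈ S ↔ ∃ i, S.orderEmbOfFin rfl i = x := by
  constructor
  · intro hx
    have := Finset.range_orderEmbOfFin S rfl
    have hx' : x ∈ Set.range (S.orderEmbOfFin rfl) := by rw [this]; exact hx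
    obtain ⟨i, hi⟩ := hx'
    exact ⟨i, hi⟩
  · rintro ⟨i, rfl⟩
    exact Finset.orderEmbOfFin_mem S rfl i

lemma image_preimage_emb {n : ℕ} (S : Finset (Fin n)) (T : Finset (Fin n)) (hTS : T ⊆ S) :
    (Finset.univ.filter (fun i : Fin S.card => S.orderEmbOfFin rfl i ∈ T)).image
      (fun i => S.orderEmbOfFin rfl i) = T := by
  ext x
  simp only [Finset.mem_image, Finset.mem_filter, Finset.mem_univ, true_and]
  constructor
  · rintro ⟨i, hi, rfl⟩
    exact hi
  · intro hx
    obtain ⟨i, rfl⟩ := (mem_iff_emb S x).mp (hTS hx)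
    exact ⟨i, hx, rfl⟩

lemma image_emb_subset {n : ℕ} (S : Finset (Fin n)) (U : Finset (Fin S.card)) :
    U.image (fun i => S.orderEmbOfFin rfl i) ⊆ S := by
  intro x hx
  simp only [Finset.mem_image] at hx
  obtain ⟨i, -, rfl⟩ := hx
  exact Finset.orderEmbOfFin_mem S rfl _

lemma image_emb_eq_iff_univ {n : ℕ} (S : Finset (Fin n)) (U : Finset (Fin S.card)) :
    U.image (fun i => S.orderEmbOfFin rfl i) = S ↔ U = Finset.univ := by
  constructor
  · intro h
    have hc : U.card = S.card := by
      rw [← card_image_emb S U, h]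
    apply Finset.eq_univ_of_card
    simpa using hc
  · rintro rfl
    apply Finset.eq_of_subset_of_card_le (image_emb_subset S Finset.univ)
    rw [card_image_emb]
    simp

/-- Counting embeddings of `σ` in `red π S` equals counting sub-embeddings inside `S`. -/
lemma permE_red (σ : Equiv.Perm (Fin m)) (π : Equiv.Perm (Fin n)) (S : Finset (Fin n)) :
    (permE σ (red π S) : ℤ) =
      ∑ T ∈ S.powerset, (if IsEmb π T σ then (1 : ℤ) else 0) := by
  classical
  unfold permE
  rw [Finset.sum_boole]
  norm_cast
  apply Finset.card_nbij (fun U => U.image (fun i => S.orderEmbOfFin rfl i))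
  · intro U hU
    simp only [Finset.mem_coe, Finset.mem_filter, Finset.mem_univ, true_and] at hU
    simp only [Finset.mem_coe, Finset.mem_filter, Finset.mem_powerset]
    exact ⟨image_emb_subset S U, (isEmb_image_iff π S U σ).mpr hU⟩
  · intro U hU V hV hUV
    exact Finset.image_injective (S.orderEmbOfFin rfl).injective hUV
  · intro T hT
    simp only [Finset.mem_coe, Finset.mem_filter, Finset.mem_powerset] at hT
    refine ⟨Finset.univ.filter (fun i : Fin S.card => S.orderEmbOfFin rfl i ∈ T), ?_, ?_⟩
    · simp only [Finset.mem_coe, Finset.mem_filter, Finset.mem_univ, true_and]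
      rw [← isEmb_image_iff π S _ σ, image_preimage_emb S T hT.1]
      exact hT.2
    · exact image_preimage_emb S T hT.1

lemma permE_eq_zero_of_not_le {σ : Equiv.Perm (Fin m)} {ρ : Equiv.Perm (Fin c)}
    (h : ¬ PermLE σ ρ) : permE σ ρ = 0 := by
  unfold permE
  rw [Finset.card_eq_zero, Finset.filter_eq_empty_iff]
  intro S _
  exact fun hemb => h (permLE_of_isEmb hemb)

lemma univ_card_fin (n : ℕ) : (Finset.univ : Finset (Fin n)).card = n := by simp

lemma red_univ_val (π : Equiv.Perm (Fin n)) :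
    ∀ i, ((red π Finset.univ) i : ℕ) = (π (Fin.cast (univ_card_fin n) i) : ℕ) := by
  apply perm_val_eq_of_lt_iff (univ_card_fin n) (red π Finset.univ) π
  intro i j
  rw [red_lt_iff]
  have hemb : ∀ i : Fin (Finset.univ : Finset (Fin n)).card,
      Finset.univ.orderEmbOfFin rfl i = Fin.cast (univ_card_fin n) i := by
    intro i
    have := Finset.orderEmbOfFin_unique
      (f := fun i : Fin (Finset.univ : Finset (Fin n)).card => Fin.cast (univ_card_fin n) i)
      (rfl : (Finset.univ : Finset (Fin n)).card = _)
      (fun i => Finset.mem_univ _) (Fin.cast_strictMono _)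
    exact (congrFun this i).symm
  rw [hemb i, hemb j]

lemma isEmb_univ_of_eq_len {σ : Equiv.Perm (Fin m)} {ρ : Equiv.Perm (Fin c)}
    (hc : m = c) (h : PermLE σ ρ) : IsEmb ρ (Finset.univ : Finset (Fin c)) σ := by
  have hval := permLE_val_of_eq_len hc h
  have hcard : (Finset.univ : Finset (Fin c)).card = m := by simp [hc]
  refine ⟨hcard, ?_⟩
  intro i
  rw [red_univ_val ρ i, hval (Fin.cast hcard i)]
  congr 1

lemma permE_of_eq_len {σ : Equiv.Perm (Fin m)} {ρ : Equiv.Perm (Fin c)}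
    (hc : m = c) (h : PermLE σ ρ) : permE σ ρ = 1 := by
  unfold permE
  rw [Finset.card_eq_one]
  refine ⟨Finset.univ, ?_⟩
  apply Finset.eq_singleton_iff_unique_mem.mpr
  constructor
  · simp only [Finset.mem_filter, Finset.mem_univ, true_and]
    exact isEmb_univ_of_eq_len hc h
  · intro S hS
    simp only [Finset.mem_filter, Finset.mem_univ, true_and] at hS
    apply Finset.eq_univ_of_card
    rw [isEmb_card hS, hc]
    simp

end RedComp

section MobBasics

open Finset

variable {α : Type*} [PartialOrder α] [Fintype α]

lemma mob_self (a : α) : mob a a = 1 := by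
  letI := Classical.decEq α
  letI : @DecidableRel α α (· ≤ ·) := Classical.decRel _
  letI : @DecidableRel α α (· < ·) := Classical.decRel _
  letI : LocallyFiniteOrder α := Fintype.toLocallyFiniteOrder
  unfold mob
  exact IncidenceAlgebra.mu_self a

lemma mob_not_le {a b : α} (h : ¬ a ≤ b) : mob a b = 0 := by
  letI := Classical.decEq α
  letI : @DecidableRel α α (· ≤ ·) := Classical.decRel _
  letI : @DecidableRel α α (· < ·) := Classical.decRel _
  letI : LocallyFiniteOrder α := Fintype.toLocallyFiniteOrder
  unfold mob
  exact IncidenceAlgebra.apply_eq_zero_of_not_le h _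

lemma mob_sum_Icc (a b : α) :
    ∑ x ∈ Finset.univ.filter (fun x => a ≤ x ∧ x ≤ b), mob a x
      = if a = b then 1 else 0 := by
  letI := Classical.decEq α
  letI : @DecidableRel α α (· ≤ ·) := Classical.decRel _
  letI : @DecidableRel α α (· < ·) := Classical.decRel _
  letI : LocallyFiniteOrder α := Fintype.toLocallyFiniteOrder
  have hIcc : Finset.univ.filter (fun x => a ≤ x ∧ x ≤ b) = Finset.Icc a b := by
    ext x
    simp [Finset.mem_Icc]
  rw [hIcc]
  have h2 := IncidenceAlgebra.sum_Icc_mu_right (𝕜 := ℤ) a b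
  have h3 : ∑ x ∈ Finset.Icc a b, mob a x = ∑ x ∈ Finset.Icc a b, IncidenceAlgebra.mu ℤ a x :=
    Finset.sum_congr rfl (fun x _ => by unfold mob; rfl)
  rw [h3, h2]

lemma mob_sum_zero {a b : α} (hab : a ≠ b) (s : Finset α)
    (hs : ∀ x, x ∈ s ↔ a ≤ x ∧ x ≤ b) :
    ∑ x ∈ s, mob a x = 0 := by
  have hfil : s = Finset.univ.filter (fun x => a ≤ x ∧ x ≤ b) := by
    ext x
    rw [hs x]
    simp
  rw [hfil]
  rw [mob_sum_Icc a b, if_neg hab]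

/-- Uniqueness of the Möbius column: any function satisfying the defining recurrence
equals `mob a ·`. -/
lemma mob_unique (a : α) (g : α → ℤ) (h0 : g a = 1)
    (hz : ∀ b, ¬ a ≤ b → g b = 0)
    (hrec : ∀ b, a < b → ∀ s : Finset α, (∀ x, x ∈ s ↔ a ≤ x ∧ x ≤ b) →
      ∑ x ∈ s, g x = 0) :
    ∀ b, g b = mob a b := by
  haveI : WellFoundedLT α := Finite.to_wellFoundedLT
  intro b
  induction b using WellFoundedLT.induction with
  | _ b IH =>
    by_cases hab : a ≤ b
    · rcases eq_or_lt_of_le hab with rfl | hlt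
      · rw [h0, mob_self]
      · have hmob := mob_sum_Icc a b
        rw [if_neg hlt.ne] at hmob
        have hg := hrec b hlt (Finset.univ.filter (fun x => a ≤ x ∧ x ≤ b))
          (fun x => by simp)
        have hbmem : b ∈ Finset.univ.filter (fun x => a ≤ x ∧ x ≤ b) := by
          simp [hab]
        rw [← Finset.add_sum_erase _ _ hbmem] at hmob hg
        have hsum : ∑ x ∈ (Finset.univ.filter (fun x => a ≤ x ∧ x ≤ b)).erase b, g x
            = ∑ x ∈ (Finset.univ.filter (fun x => a ≤ x ∧ x ≤ b)).erase b, mob a x := by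
          apply Finset.sum_congr rfl
          intro x hx
          have hx' := Finset.mem_of_mem_erase hx
          simp only [Finset.mem_filter] at hx'
          exact IH x (lt_of_le_of_ne hx'.2.2 (Finset.ne_of_mem_erase hx))
        omega
    · rw [hz b hab, mob_not_le hab]

/-- The canonical coercion `α → Bd α`. -/
def bdCoe {A : Type*} (x : A) : Bd A := ((x : WithTop A) : WithBot (WithTop A))

lemma sum_Bd_univ {A : Type*} [Fintype A] (f : Bd A → ℤ) :
    ∑ x : Bd A, f x = f ⊥ + f ⊤ + ∑ x : A, f (bdCoe x) := by
  have h1 : ∑ x : Bd A, f x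
      = f ⊥ + ∑ y : WithTop A, f (Option.some y : Bd A) := by
    exact Fintype.sum_option f
  have h2 : ∑ y : WithTop A, f (Option.some y : Bd A)
      = f ⊤ + ∑ x : A, f (bdCoe x) := by
    exact Fintype.sum_option (fun y : Option A => f (Option.some y : Bd A))
  rw [h1, h2]
  ring

lemma bd_bot_ne_top {A : Type*} : (⊥ : Bd A) ≠ ⊤ := by
  exact WithBot.bot_ne_coe

lemma bdCoe_le_iff {A : Type*} [PartialOrder A] {x y : A} : bdCoe x ≤ bdCoe y ↔ x ≤ y := by
  unfold bdCoe
  rw [WithBot.coe_le_coe, WithTop.coe_le_coe]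

lemma not_top_le_bdCoe {A : Type*} [PartialOrder A] (x : A) : ¬ (⊤ : Bd A) ≤ bdCoe x := by
  unfold bdCoe
  intro h
  rw [show (⊤ : Bd A) = ((⊤ : WithTop A) : WithBot (WithTop A)) from rfl,
    WithBot.coe_le_coe] at h
  exact WithTop.coe_ne_top (top_le_iff.mp h)

lemma bdCoe_ne_bot {A : Type*} (x : A) : bdCoe x ≠ (⊥ : Bd A) :=
  fun h => WithBot.coe_ne_bot h

lemma bold_bd_bot_lt_top {A : Type*} [PartialOrder A] : (⊥ : Bd A) < ⊤ :=
  lt_of_le_of_ne bot_le bd_bot_ne_top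

lemma bd_bot_lt_bdCoe {A : Type*} [PartialOrder A] (x : A) : (⊥ : Bd A) < bdCoe x :=
  lt_of_le_of_ne bot_le (fun h => bdCoe_ne_bot x h.symm)

lemma sum_Bd_le_top {A : Type*} [PartialOrder A] [Fintype A] (f : Bd A → ℤ) :
    ∑ x ∈ Finset.univ.filter (fun x : Bd A => ⊥ ≤ x ∧ x ≤ ⊤), f x
      = f ⊥ + f ⊤ + ∑ x : A, f (bdCoe x) := by
  rw [Finset.filter_true_of_mem (fun x _ => ⟨bot_le, le_top⟩)]
  exact sum_Bd_univ f

lemma sum_Bd_le_coe {A : Type*} [PartialOrder A] [Fintype A] (f : Bd A → ℤ) (S : A)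
    (s : Finset (Bd A)) (hs : ∀ x, x ∈ s ↔ (⊥ ≤ x ∧ x ≤ bdCoe S))
    (t : Finset A) (ht : ∀ y, y ∈ t ↔ y ≤ S) :
    ∑ x ∈ s, f x = f ⊥ + ∑ x ∈ t, f (bdCoe x) := by
  have hs' : s = Finset.univ.filter (fun x : Bd A => ⊥ ≤ x ∧ x ≤ bdCoe S) := by
    ext x
    rw [hs x]
    simp
  have ht' : t = Finset.univ.filter (fun y : A => y ≤ S) := by
    ext y
    rw [ht y]
    simp
  rw [hs', ht']
  rw [Finset.sum_filter, sum_Bd_univ (fun x => if ⊥ ≤ x ∧ x ≤ bdCoe S then f x else 0)]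
  rw [if_pos ⟨le_refl _, bot_le⟩, if_neg (fun h => not_top_le_bdCoe S h.2)]
  rw [Finset.sum_filter]
  have heq : ∀ x : A, (if ⊥ ≤ bdCoe x ∧ bdCoe x ≤ bdCoe S then f (bdCoe x) else 0)
      = (if x ≤ S then f (bdCoe x) else 0) := by
    intro x
    by_cases h : x ≤ S
    · rw [if_pos ⟨bot_le, bdCoe_le_iff.mpr h⟩, if_pos h]
    · rw [if_neg (fun hh => h (bdCoe_le_iff.mp hh.2)), if_neg h]
  rw [Finset.sum_congr rfl (fun x _ => heq x)]
  ring

/-- `mobHat` of an empty poset is `-1`. -/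
lemma mobHat_of_isEmpty {A : Type*} [PartialOrder A] [Fintype A] (h : IsEmpty A) :
    mobHat A = -1 := by
  have hsum := mob_sum_zero (a := (⊥ : Bd A)) (b := ⊤) bd_bot_ne_top Finset.univ
    (fun x => by simpa using ⟨bot_le, le_top⟩)
  rw [sum_Bd_univ (fun x => mob (⊥ : Bd A) x)] at hsum
  rw [Finset.sum_eq_zero (fun x _ => (h.false x).elim), mob_self] at hsum
  unfold mobHat
  omega

lemma astar_isEmpty {k c : ℕ} (lam : Equiv.Perm (Fin k)) (ρ : Equiv.Perm (Fin c))
    (h : c ≤ k) : IsEmpty (AstarP ρ lam) := by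
  constructor
  rintro ⟨S, hSne, hSlam⟩
  have h1 : S.card < c := by
    have := Finset.card_lt_card (Finset.ssubset_univ_iff.mpr hSne)
    simpa using this
  have h2 : k ≤ S.card := permLE_card_le hSlam
  omega

lemma mobHat_astar_eq_len {k c : ℕ} (lam : Equiv.Perm (Fin k)) (ρ : Equiv.Perm (Fin c))
    (h : c ≤ k) : mobHat (AstarP ρ lam) = -1 :=
  mobHat_of_isEmpty (astar_isEmpty lam ρ h)

end MobBasics

section MRec

open Finset

/-- Transfer of the sum over proper pattern-subsets of `red π S` to a sum over subsets of
`S`. -/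
lemma sum_bij_subsets {n k : ℕ} (lam : Equiv.Perm (Fin k)) (π : Equiv.Perm (Fin n))
    (S : Finset (Fin n)) :
    ∑ U ∈ Finset.univ.filter (fun U : Finset (Fin S.card) =>
        U ≠ Finset.univ ∧ PermLE lam (red (red π S) U)),
      mobHat (AstarP (red (red π S) U) lam)
    = ∑ T ∈ Finset.univ.filter (fun T : Finset (Fin n) =>
        T ⊆ S ∧ T ≠ S ∧ PermLE lam (red π T)),
      mobHat (AstarP (red π T) lam) := by
  refine Finset.sum_bij' (i := fun U _ => U.image (fun i => S.orderEmbOfFin rfl i))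
    (j := fun T _ => Finset.univ.filter (fun i : Fin S.card => S.orderEmbOfFin rfl i ∈ T))
    ?_ ?_ ?_ ?_ ?_
  · intro U hU
    simp only [Finset.mem_filter, Finset.mem_univ, true_and] at hU ⊢
    refine ⟨image_emb_subset S U, ?_, ?_⟩
    · intro h
      exact hU.1 ((image_emb_eq_iff_univ S U).mp h)
    · rw [permLE_congr_right (lam := lam) (card_image_emb S U) _ _ (red_red_val π S U)]
      exact hU.2
  · intro T hT
    simp only [Finset.mem_filter, Finset.mem_univ, true_and] at hT ⊢
    have himg := image_preimage_emb S T hT.1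
    constructor
    · intro h
      apply hT.2.1
      rw [← himg, h]
      apply Finset.eq_of_subset_of_card_le (image_emb_subset S Finset.univ)
      rw [card_image_emb]
      simp
    · rw [← permLE_congr_right (lam := lam) (card_image_emb S _) _ _ (red_red_val π S _),
        himg]
      exact hT.2.2
  · intro U hU
    simp only [Finset.mem_filter, Finset.mem_univ, true_and] at hU
    ext i
    simp only [Finset.mem_filter, Finset.mem_univ, true_and, Finset.mem_image]
    constructor
    · rintro ⟨j, hj, hji⟩
      rwa [(S.orderEmbOfFin rfl).injective hji] at hj
    · intro hi
      exact ⟨i, hi, rfl⟩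
  · intro T hT
    simp only [Finset.mem_filter, Finset.mem_univ, true_and] at hT
    exact image_preimage_emb S T hT.1
  · intro U hU
    exact (mobHat_Astar_congr lam (card_image_emb S U) _ _ (red_red_val π S U)).symm

/-- Subtype-filtered sums are filtered sums. -/
lemma sum_subtype_filter {β : Type*} {p q : β → Prop} [Fintype β]
    [Fintype {b // p b}] (f : β → ℤ) :
    ∑ y ∈ Finset.univ.filter (fun y : {b // p b} => q y.val), f y.val
      = ∑ S ∈ Finset.univ.filter (fun S => p S ∧ q S), f S := by
  classical
  calc ∑ y ∈ Finset.univ.filter (fun y : {b // p b} => q y.val), f y.val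
      = ∑ y : {b // p b}, (if q y.val then f y.val else 0) := by
        rw [Finset.sum_filter]
    _ = ∑ S ∈ Finset.univ.filter (fun S => p S), (if q S then f S else 0) :=
        (Finset.sum_subtype (Finset.univ.filter (fun S => p S)) (fun x => by simp)
          (fun S => if q S then f S else 0)).symm
    _ = ∑ S ∈ (Finset.univ.filter (fun S => p S)).filter (fun S => q S), f S :=
        (Finset.sum_filter _ _).symm
    _ = ∑ S ∈ Finset.univ.filter (fun S => p S ∧ q S), f S := by
        rw [Finset.filter_filter]

/-- Abstract-set version of `sum_subtype_filter`, robust to instance mismatches. -/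
lemma sum_subtype_filter' {β : Type*} {p q : β → Prop} [Fintype β]
    [Fintype {b // p b}] (f : β → ℤ) (s : Finset {b // p b}) (hs : ∀ y, y ∈ s ↔ q y.val)
    (t : Finset β) (ht : ∀ S, S ∈ t ↔ p S ∧ q S) :
    ∑ y ∈ s, f y.val = ∑ S ∈ t, f S := by
  classical
  have hs' : s = Finset.univ.filter (fun y : {b // p b} => q y.val) := by
    ext y
    rw [hs y]
    simp
  have ht' : t = Finset.univ.filter (fun S => p S ∧ q S) := by
    ext S
    rw [ht S]
    simp
  rw [hs', ht']
  exact sum_subtype_filter f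

lemma sum_subtype_univ {β : Type*} {p : β → Prop} [Fintype β] [Fintype {b // p b}]
    (f : β → ℤ) :
    ∑ y : {b // p b}, f y.val = ∑ S ∈ Finset.univ.filter (fun S => p S), f S := by
  classical
  rw [← Finset.sum_subtype (Finset.univ.filter fun S => p S) (fun x => by simp) f]

/-- The fundamental recurrence for `mobHat (AstarP π lam)`. -/
lemma mobHat_astar_rec : ∀ (n : ℕ) (π : Equiv.Perm (Fin n)) (k : ℕ) (lam : Equiv.Perm (Fin k)),
    mobHat (AstarP π lam) = -1 - ∑ S ∈ Finset.univ.filter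
        (fun S : Finset (Fin n) => S ≠ Finset.univ ∧ PermLE lam (red π S)),
      mobHat (AstarP (red π S) lam) := by
  intro n
  induction n using Nat.strong_induction_on with
  | _ n IH =>
    intro π k lam
    set F : AstarP π lam → ℤ := fun x => mobHat (AstarP (red π x.val) lam) with hF
    set gT : ℤ := -1 - ∑ x : AstarP π lam, F x with hgT
    set g : Bd (AstarP π lam) → ℤ := fun z =>
      WithBot.recBotCoe 1 (fun w => WithTop.recTopCoe gT (fun x => F x) w) z with hg
    have h0 : g ⊥ = 1 := rfl
    have htop : g ⊤ = gT := rfl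
    have hcoe : ∀ x, g (bdCoe x) = F x := fun _ => rfl
    have hz : ∀ b, ¬ (⊥ : Bd (AstarP π lam)) ≤ b → g b = 0 := fun b hb => absurd bot_le hb
    have hrec : ∀ b, (⊥ : Bd (AstarP π lam)) < b →
        ∀ s : Finset (Bd (AstarP π lam)), (∀ x, x ∈ s ↔ (⊥ ≤ x ∧ x ≤ b)) →
          ∑ x ∈ s, g x = 0 := by
      intro b
      induction b using WithBot.recBotCoe with
      | bot =>
        intro hb
        exact absurd hb (lt_irrefl _)
      | coe w =>
        induction w using WithTop.recTopCoe with
        | top =>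
          intro _ s hsmem
          have hs : s = Finset.univ := by
            apply Finset.eq_univ_iff_forall.mpr
            intro x
            rw [hsmem x]
            exact ⟨bot_le, le_top⟩
          rw [hs, sum_Bd_univ g, h0, htop, hgT]
          have hc2 : ∑ x : AstarP π lam, g (bdCoe x) = ∑ x : AstarP π lam, F x :=
            Finset.sum_congr rfl (fun x _ => hcoe x)
          rw [hc2]
          ring
        | coe x =>
          intro _ s hsmem
          have hstep : ∑ z ∈ s, g z = g ⊥ + ∑ y ∈ Finset.univ.filter
              (fun y : AstarP π lam => (y : Finset (Fin n)) ⊆ (x : Finset (Fin n))),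
              g (bdCoe y) := by
            apply sum_Bd_le_coe g x s
            · intro z
              exact hsmem z
            · intro y
              simp only [Finset.mem_filter, Finset.mem_univ, true_and]
              rfl
          rw [hstep, h0]
          have hcv : ∑ y ∈ Finset.univ.filter
              (fun y : AstarP π lam => (y : Finset (Fin n)) ⊆ (x : Finset (Fin n))),
              g (bdCoe y)
              = ∑ y ∈ Finset.univ.filter
              (fun y : AstarP π lam => (y : Finset (Fin n)) ⊆ (x : Finset (Fin n))), F y :=
            Finset.sum_congr rfl (fun y _ => hcoe y)
          rw [hcv]
          have hsub : ∑ y ∈ Finset.univ.filter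
              (fun y : AstarP π lam => (y : Finset (Fin n)) ⊆ (x : Finset (Fin n))), F y
              = ∑ T ∈ Finset.univ.filter (fun T : Finset (Fin n) =>
                  (T ≠ Finset.univ ∧ PermLE lam (red π T)) ∧ T ⊆ (x : Finset (Fin n))),
                mobHat (AstarP (red π T) lam) := by
            apply sum_subtype_filter'
              (p := fun S => S ≠ Finset.univ ∧ PermLE lam (red π S))
              (q := fun T => T ⊆ (x : Finset (Fin n)))
              (fun T => mobHat (AstarP (red π T) lam))
            · intro y
              simp only [Finset.mem_filter, Finset.mem_univ, true_and]
            · intro T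
              simp only [Finset.mem_filter, Finset.mem_univ, true_and]
          rw [hsub]
          obtain ⟨S, hS1, hS2⟩ := x
          simp only
          have hSmem : S ∈ Finset.univ.filter (fun T : Finset (Fin n) =>
              (T ≠ Finset.univ ∧ PermLE lam (red π T)) ∧ T ⊆ S) := by
            simp only [Finset.mem_filter, Finset.mem_univ, true_and]
            exact ⟨⟨hS1, hS2⟩, Finset.Subset.refl S⟩
          rw [← Finset.add_sum_erase _ _ hSmem]
          have hcard : S.card < n := by
            have := Finset.card_lt_card (Finset.ssubset_univ_iff.mpr hS1)
            simpa using this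
          have hIH := IH S.card hcard (red π S) k lam
          have herase : (Finset.univ.filter (fun T : Finset (Fin n) =>
              (T ≠ Finset.univ ∧ PermLE lam (red π T)) ∧ T ⊆ S)).erase S
              = Finset.univ.filter (fun T : Finset (Fin n) =>
                  T ⊆ S ∧ T ≠ S ∧ PermLE lam (red π T)) := by
            ext T
            simp only [Finset.mem_erase, Finset.mem_filter, Finset.mem_univ, true_and]
            constructor
            · rintro ⟨hne, ⟨⟨-, hle⟩, hsub'⟩⟩
              exact ⟨hsub', hne, hle⟩
            · rintro ⟨hsub', hne, hle⟩
              refine ⟨hne, ⟨⟨?_, hle⟩, hsub'⟩⟩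
              intro h
              subst h
              exact hS1 (Finset.univ_subset_iff.mp hsub')
          rw [herase, hIH, sum_bij_subsets lam π S]
          ring
    have hmain := mob_unique (⊥ : Bd (AstarP π lam)) g h0 hz hrec ⊤
    have hfin : mobHat (AstarP π lam) = g ⊤ := hmain.symm
    rw [hfin, htop, hgT]
    have hconv : ∑ x : AstarP π lam, F x
        = ∑ S ∈ Finset.univ.filter
            (fun S : Finset (Fin n) => S ≠ Finset.univ ∧ PermLE lam (red π S)),
          mobHat (AstarP (red π S) lam) := by
      apply sum_subtype_filter' (p := fun S => S ≠ Finset.univ ∧ PermLE lam (red π S))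
        (q := fun _ => True) (fun T => mobHat (AstarP (red π T) lam))
      · intro y
        simp
      · intro T
        simp only [Finset.mem_filter, Finset.mem_univ, true_and, and_true]
    rw [hconv]

end MRec

section FinalIdentity

open Finset

lemma sum_superset_alt {n m : ℕ} (T : Finset (Fin n)) (hT : T ≠ Finset.univ)
    (hTm : T.card = m) :
    ∑ S ∈ (Finset.univ : Finset (Finset (Fin n))),
      (if T ⊆ S then (-1:ℤ)^(S.card - m) else 0) = 0 := by
  rw [← Finset.sum_filter]
  have hbij : ∑ S ∈ Finset.univ.filter (fun S : Finset (Fin n) => T ⊆ S),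
      (-1:ℤ)^(S.card - m) = ∑ U ∈ Tᶜ.powerset, (-1:ℤ)^U.card := by
    refine Finset.sum_bij' (i := fun S _ => S \ T) (j := fun U _ => T ∪ U) ?_ ?_ ?_ ?_ ?_
    · intro S hS
      simp only [Finset.mem_filter, Finset.mem_univ, true_and] at hS
      rw [Finset.mem_powerset]
      intro x hx
      rw [Finset.mem_compl]
      exact (Finset.mem_sdiff.mp hx).2
    · intro U hU
      simp only [Finset.mem_filter, Finset.mem_univ, true_and]
      exact Finset.subset_union_left
    · intro S hS
      simp only [Finset.mem_filter, Finset.mem_univ, true_and] at hS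
      exact Finset.union_sdiff_of_subset hS
    · intro U hU
      rw [Finset.mem_powerset] at hU
      have hdisj : Disjoint T U :=
        Finset.disjoint_left.mpr (fun a haT haU => (Finset.mem_compl.mp (hU haU)) haT)
      exact Finset.union_sdiff_cancel_left hdisj
    · intro S hS
      simp only [Finset.mem_filter, Finset.mem_univ, true_and] at hS
      congr 1
      rw [Finset.card_sdiff_of_subset hS, hTm]
  rw [hbij]
  apply sum_powerset_neg_one_pow_card_of_nonempty
  rw [Finset.nonempty_iff_ne_empty]
  intro h
  apply hT
  rwa [Finset.compl_eq_empty_iff] at h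

lemma sum_alt_emb {m n : ℕ} (σ : Equiv.Perm (Fin m)) (π : Equiv.Perm (Fin n)) (hmn : m < n) :
    (-1:ℤ)^(n-m) * (permE σ π : ℤ)
      + ∑ S ∈ Finset.univ.filter (fun S : Finset (Fin n) => S ≠ Finset.univ),
          (-1:ℤ)^(S.card - m) * (permE σ (red π S) : ℤ) = 0 := by
  classical
  set ind : Finset (Fin n) → ℤ := fun T => if IsEmb π T σ then 1 else 0 with hind
  have hperm : ∀ S : Finset (Fin n), (permE σ (red π S) : ℤ) = ∑ T ∈ S.powerset, ind T :=
    fun S => permE_red σ π S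
  have hpermU : (permE σ π : ℤ) = ∑ T ∈ (Finset.univ : Finset (Fin n)).powerset, ind T := by
    rw [Finset.powerset_univ]
    simp only [hind]
    rw [Finset.sum_boole]
    unfold permE
    norm_num
  have hfull : ∑ S ∈ (Finset.univ : Finset (Finset (Fin n))),
      (-1:ℤ)^(S.card-m) * (∑ T ∈ S.powerset, ind T) = 0 := by
    have h1 : ∀ S : Finset (Fin n), (-1:ℤ)^(S.card-m) * (∑ T ∈ S.powerset, ind T)
        = ∑ T ∈ (Finset.univ : Finset (Finset (Fin n))),
            (if T ⊆ S then (-1:ℤ)^(S.card-m) * ind T else 0) := by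
      intro S
      rw [Finset.mul_sum]
      have hpw : S.powerset = Finset.univ.filter (fun T : Finset (Fin n) => T ⊆ S) := by
        ext T
        simp [Finset.mem_powerset]
      rw [hpw, Finset.sum_filter]
    rw [Finset.sum_congr rfl (fun S _ => h1 S), Finset.sum_comm]
    apply Finset.sum_eq_zero
    intro T _
    have h2 : ∀ S : Finset (Fin n), (if T ⊆ S then (-1:ℤ)^(S.card-m) * ind T else 0)
        = ind T * (if T ⊆ S then (-1:ℤ)^(S.card-m) else 0) := by
      intro S
      by_cases hTS : T ⊆ S <;> simp [hTS, mul_comm]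
    rw [Finset.sum_congr rfl (fun S _ => h2 S), ← Finset.mul_sum]
    by_cases hemb : IsEmb π T σ
    · have hTm : T.card = m := isEmb_card hemb
      have hTu : T ≠ Finset.univ := by
        intro h
        rw [h] at hTm
        simp only [Finset.card_univ, Fintype.card_fin] at hTm
        omega
      rw [sum_superset_alt T hTu hTm]
      ring
    · simp [hind, hemb]
  have humem : (Finset.univ : Finset (Fin n)) ∈ (Finset.univ : Finset (Finset (Fin n))) :=
    Finset.mem_univ _
  rw [← Finset.add_sum_erase _ _ humem] at hfull
  have herase : (Finset.univ : Finset (Finset (Fin n))).erase Finset.univ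
      = Finset.univ.filter (fun S : Finset (Fin n) => S ≠ Finset.univ) := by
    ext S
    simp [Finset.mem_erase]
  rw [herase, ← hpermU,
    show ((Finset.univ : Finset (Fin n)).card) = n by simp] at hfull
  rw [Finset.sum_congr rfl (fun S _ => by rw [← hperm S])] at hfull
  exact hfull

end FinalIdentity

section MainTheorem

open Finset

lemma main_key
    (mu : ∀ {a b : ℕ}, Equiv.Perm (Fin a) → Equiv.Perm (Fin b) → ℤ)
    (hmu_self : ∀ {a : ℕ} (τ : Equiv.Perm (Fin a)), mu τ τ = 1)
    (hmu_rec : ∀ {a b : ℕ} (τ : Equiv.Perm (Fin a)) (ρ : Equiv.Perm (Fin b)),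
      PermLT τ ρ →
      ∑ k ∈ Finset.range (b + 1), ∑ lam : Equiv.Perm (Fin k),
        (if PermLE τ lam ∧ PermLE lam ρ then mu τ lam else 0) = 0) :
    ∀ (n : ℕ) (π : Equiv.Perm (Fin n)) (m : ℕ) (σ : Equiv.Perm (Fin m)), PermLT σ π →
    mu σ π = (-1) ^ (n - m) * (permE σ π : ℤ) +
      ∑ k ∈ Finset.range (n + 1), ∑ lam : Equiv.Perm (Fin k),
        (if PermLE σ lam ∧ PermLE lam π ∧ ¬(k = n ∧ HEq lam π) then
          mu σ lam * mobHat (AstarP π lam) else 0) := by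
  intro n
  induction n using Nat.strong_induction_on with
  | _ n IH =>
    intro π m σ h
    have hmn : m ≤ n := permLE_card_le h.1
    have hmlt : m < n := lt_of_le_of_ne hmn (fun he => h.2 (permLE_symm_of_eq_len he h.1))
    -- Inner sum evaluation
    have hInner : ∀ S : Finset (Fin n), S ≠ Finset.univ →
        (∑ k ∈ Finset.range (n+1), ∑ lam : Equiv.Perm (Fin k),
          (if PermLE σ lam ∧ PermLE lam (red π S) then
            mu σ lam * mobHat (AstarP (red π S) lam) else 0))
        = -((-1:ℤ)^(S.card - m) * (permE σ (red π S) : ℤ)) := by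
      intro S hS
      have hclt : S.card < n := by
        have := Finset.card_lt_card (Finset.ssubset_univ_iff.mpr hS)
        simpa using this
      by_cases hle : PermLE σ (red π S)
      · by_cases hge : PermLE (red π S) σ
        · -- equal length case
          have hcm : m = S.card := le_antisymm (permLE_card_le hle) (permLE_card_le hge)
          rw [Finset.sum_eq_single_of_mem m (by rw [Finset.mem_range]; omega)]
          · rw [Finset.sum_eq_single_of_mem σ (Finset.mem_univ σ)]
            · rw [if_pos ⟨permLE_refl σ, hle⟩, hmu_self σ,
                mobHat_astar_eq_len σ (red π S) (le_of_eq hcm.symm),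
                permE_of_eq_len hcm hle]
              have h0 : S.card - m = 0 := by omega
              rw [h0]
              norm_num
            · intro lam _ hne
              apply if_neg
              rintro ⟨h1, -⟩
              exact hne (eq_of_heq (permLE_heq_of_eq_len rfl h1)).symm
          · intro k _ hkm
            apply Finset.sum_eq_zero
            intro lam _
            apply if_neg
            rintro ⟨h1, h2⟩
            have hk1 : m ≤ k := permLE_card_le h1
            have hk2 : k ≤ S.card := permLE_card_le h2
            omega
        · -- strict case, use induction hypothesis
          have hIH2 := IH S.card hclt (red π S) m σ ⟨hle, hge⟩
          have htr : (∑ k ∈ Finset.range (n+1), ∑ lam : Equiv.Perm (Fin k),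
              (if PermLE σ lam ∧ PermLE lam (red π S) then
                mu σ lam * mobHat (AstarP (red π S) lam) else 0))
              = ∑ k ∈ Finset.range (S.card+1), ∑ lam : Equiv.Perm (Fin k),
              (if PermLE σ lam ∧ PermLE lam (red π S) then
                mu σ lam * mobHat (AstarP (red π S) lam) else 0) := by
            symm
            apply Finset.sum_subset
            · rw [Finset.range_subset_range]
              omega
            · intro k _ hnk
              rw [Finset.mem_range, not_lt] at hnk
              apply Finset.sum_eq_zero
              intro lam _
              apply if_neg
              rintro ⟨-, h2⟩
              have h3 := permLE_card_le h2
              omega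
          rw [htr]
          have hsplit2 : ∀ k ∈ Finset.range (S.card + 1), (∑ lam : Equiv.Perm (Fin k),
              (if PermLE σ lam ∧ PermLE lam (red π S) then
                mu σ lam * mobHat (AstarP (red π S) lam) else 0))
              = (∑ lam : Equiv.Perm (Fin k),
                (if PermLE σ lam ∧ PermLE lam (red π S) ∧ ¬(k = S.card ∧ HEq lam (red π S))
                  then mu σ lam * mobHat (AstarP (red π S) lam) else 0))
              + (∑ lam : Equiv.Perm (Fin k),
                (if PermLE σ lam ∧ PermLE lam (red π S) ∧ (k = S.card ∧ HEq lam (red π S))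
                  then mu σ lam * mobHat (AstarP (red π S) lam) else 0)) := by
            intro k _
            rw [← Finset.sum_add_distrib]
            apply Finset.sum_congr rfl
            intro lam _
            by_cases h1 : PermLE σ lam ∧ PermLE lam (red π S)
            · by_cases h2 : k = S.card ∧ HEq lam (red π S)
              · rw [if_pos h1, if_neg (fun hh => hh.2.2 h2), if_pos ⟨h1.1, h1.2, h2⟩]
                ring
              · rw [if_pos h1, if_pos ⟨h1.1, h1.2, h2⟩, if_neg (fun hh => h2 hh.2.2)]
                ring
            · rw [if_neg h1, if_neg (fun hh => h1 ⟨hh.1, hh.2.1⟩),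
                if_neg (fun hh => h1 ⟨hh.1, hh.2.1⟩)]
              ring
          rw [Finset.sum_congr rfl hsplit2, Finset.sum_add_distrib]
          have hB : (∑ k ∈ Finset.range (S.card + 1), ∑ lam : Equiv.Perm (Fin k),
              (if PermLE σ lam ∧ PermLE lam (red π S) ∧ (k = S.card ∧ HEq lam (red π S))
                then mu σ lam * mobHat (AstarP (red π S) lam) else 0))
              = - mu σ (red π S) := by
            rw [Finset.sum_eq_single_of_mem S.card (by rw [Finset.mem_range]; omega)]
            · rw [Finset.sum_eq_single_of_mem (red π S) (Finset.mem_univ _)]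
              · rw [if_pos ⟨hle, permLE_refl _, rfl, HEq.rfl⟩,
                  mobHat_astar_eq_len (red π S) (red π S) (le_refl _)]
                ring
              · intro lam _ hne
                apply if_neg
                rintro ⟨-, -, -, h4⟩
                exact hne (eq_of_heq h4)
            · intro k _ hkm
              apply Finset.sum_eq_zero
              intro lam _
              apply if_neg
              rintro ⟨-, -, h3, -⟩
              exact hkm h3
          rw [hB]
          have hA : (∑ k ∈ Finset.range (S.card + 1), ∑ lam : Equiv.Perm (Fin k),
              (if PermLE σ lam ∧ PermLE lam (red π S) ∧ ¬(k = S.card ∧ HEq lam (red π S))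
                then mu σ lam * mobHat (AstarP (red π S) lam) else 0))
              = mu σ (red π S) - (-1:ℤ)^(S.card - m) * (permE σ (red π S) : ℤ) := by
            omega
          rw [hA]
          ring
      · -- σ not contained in red π S
        rw [permE_eq_zero_of_not_le hle]
        rw [Finset.sum_eq_zero]
        · norm_num
        · intro k _
          apply Finset.sum_eq_zero
          intro lam _
          apply if_neg
          rintro ⟨h1, h2⟩
          exact hle (permLE_trans h1 h2)
    -- Step 1: split the mobHat recurrence into the two pieces
    have hsplit : (∑ k ∈ Finset.range (n + 1), ∑ lam : Equiv.Perm (Fin k),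
        (if PermLE σ lam ∧ PermLE lam π ∧ ¬(k = n ∧ HEq lam π) then
          mu σ lam * mobHat (AstarP π lam) else 0))
        = (∑ k ∈ Finset.range (n + 1), ∑ lam : Equiv.Perm (Fin k),
          (-(if PermLE σ lam ∧ PermLE lam π ∧ ¬(k = n ∧ HEq lam π) then mu σ lam else 0)))
        + (∑ k ∈ Finset.range (n + 1), ∑ lam : Equiv.Perm (Fin k),
          (-(if PermLE σ lam ∧ PermLE lam π ∧ ¬(k = n ∧ HEq lam π) then
            mu σ lam * (∑ S ∈ Finset.univ.filter
              (fun S : Finset (Fin n) => S ≠ Finset.univ ∧ PermLE lam (red π S)),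
              mobHat (AstarP (red π S) lam)) else 0))) := by
      rw [← Finset.sum_add_distrib]
      apply Finset.sum_congr rfl
      intro k _
      rw [← Finset.sum_add_distrib]
      apply Finset.sum_congr rfl
      intro lam _
      by_cases hC : PermLE σ lam ∧ PermLE lam π ∧ ¬(k = n ∧ HEq lam π)
      · rw [if_pos hC, if_pos hC, if_pos hC, mobHat_astar_rec n π k lam]
        ring
      · rw [if_neg hC, if_neg hC, if_neg hC]
        ring
    -- Step 2: the first piece is mu σ π
    have hP1 : (∑ k ∈ Finset.range (n + 1), ∑ lam : Equiv.Perm (Fin k),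
        (if PermLE σ lam ∧ PermLE lam π ∧ ¬(k = n ∧ HEq lam π) then mu σ lam else 0))
        = - mu σ π := by
      have h0 := hmu_rec σ π h
      have hdiff : ∀ k ∈ Finset.range (n+1), (∑ lam : Equiv.Perm (Fin k),
          (if PermLE σ lam ∧ PermLE lam π then mu σ lam else 0))
          = (∑ lam : Equiv.Perm (Fin k),
            (if PermLE σ lam ∧ PermLE lam π ∧ ¬(k = n ∧ HEq lam π) then mu σ lam else 0))
          + (∑ lam : Equiv.Perm (Fin k),
            (if PermLE σ lam ∧ PermLE lam π ∧ (k = n ∧ HEq lam π) then mu σ lam else 0)) := by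
        intro k _
        rw [← Finset.sum_add_distrib]
        apply Finset.sum_congr rfl
        intro lam _
        by_cases h1 : PermLE σ lam ∧ PermLE lam π
        · by_cases h2 : k = n ∧ HEq lam π
          · rw [if_pos h1, if_neg (fun hh => hh.2.2 h2), if_pos ⟨h1.1, h1.2, h2⟩]
            ring
          · rw [if_pos h1, if_pos ⟨h1.1, h1.2, h2⟩, if_neg (fun hh => h2 hh.2.2)]
            ring
        · rw [if_neg h1, if_neg (fun hh => h1 ⟨hh.1, hh.2.1⟩),
            if_neg (fun hh => h1 ⟨hh.1, hh.2.1⟩)]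
          ring
      rw [Finset.sum_congr rfl hdiff, Finset.sum_add_distrib] at h0
      have hPtop : (∑ k ∈ Finset.range (n+1), ∑ lam : Equiv.Perm (Fin k),
          (if PermLE σ lam ∧ PermLE lam π ∧ (k = n ∧ HEq lam π) then mu σ lam else 0))
          = mu σ π := by
        rw [Finset.sum_eq_single_of_mem n (by rw [Finset.mem_range]; omega)]
        · rw [Finset.sum_eq_single_of_mem π (Finset.mem_univ _)]
          · rw [if_pos ⟨h.1, permLE_refl _, rfl, HEq.rfl⟩]
          · intro lam _ hne
            apply if_neg
            rintro ⟨-, -, -, h4⟩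
            exact hne (eq_of_heq h4)
        · intro k _ hkm
          apply Finset.sum_eq_zero
          intro lam _
          apply if_neg
          rintro ⟨-, -, h3, -⟩
          exact hkm h3
      rw [hPtop] at h0
      omega
    -- Step 3: the second piece
    have hP2 : (∑ k ∈ Finset.range (n + 1), ∑ lam : Equiv.Perm (Fin k),
        (if PermLE σ lam ∧ PermLE lam π ∧ ¬(k = n ∧ HEq lam π) then
          mu σ lam * (∑ S ∈ Finset.univ.filter
            (fun S : Finset (Fin n) => S ≠ Finset.univ ∧ PermLE lam (red π S)),
            mobHat (AstarP (red π S) lam)) else 0))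
        = ∑ S ∈ Finset.univ.filter (fun S : Finset (Fin n) => S ≠ Finset.univ),
            (-((-1:ℤ)^(S.card - m) * (permE σ (red π S) : ℤ))) := by
      have hstep1 : ∀ k ∈ Finset.range (n+1), ∀ lam : Equiv.Perm (Fin k),
          (if PermLE σ lam ∧ PermLE lam π ∧ ¬(k = n ∧ HEq lam π) then
            mu σ lam * (∑ S ∈ Finset.univ.filter
              (fun S : Finset (Fin n) => S ≠ Finset.univ ∧ PermLE lam (red π S)),
              mobHat (AstarP (red π S) lam)) else 0)
          = ∑ S ∈ (Finset.univ : Finset (Finset (Fin n))),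
            (if (PermLE σ lam ∧ PermLE lam π ∧ ¬(k = n ∧ HEq lam π))
                ∧ (S ≠ Finset.univ ∧ PermLE lam (red π S)) then
              mu σ lam * mobHat (AstarP (red π S) lam) else 0) := by
        intro k _ lam
        by_cases hC : PermLE σ lam ∧ PermLE lam π ∧ ¬(k = n ∧ HEq lam π)
        · rw [if_pos hC, Finset.mul_sum, Finset.sum_filter]
          apply Finset.sum_congr rfl
          intro S _
          by_cases hc2 : S ≠ Finset.univ ∧ PermLE lam (red π S)
          · rw [if_pos hc2, if_pos ⟨hC, hc2⟩]
          · rw [if_neg hc2, if_neg (fun hh => hc2 hh.2)]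
        · rw [if_neg hC]
          symm
          apply Finset.sum_eq_zero
          intro S _
          rw [if_neg (fun hh => hC hh.1)]
      calc (∑ k ∈ Finset.range (n + 1), ∑ lam : Equiv.Perm (Fin k),
          (if PermLE σ lam ∧ PermLE lam π ∧ ¬(k = n ∧ HEq lam π) then
            mu σ lam * (∑ S ∈ Finset.univ.filter
              (fun S : Finset (Fin n) => S ≠ Finset.univ ∧ PermLE lam (red π S)),
              mobHat (AstarP (red π S) lam)) else 0))
          = ∑ k ∈ Finset.range (n + 1), ∑ lam : Equiv.Perm (Fin k),
            ∑ S ∈ (Finset.univ : Finset (Finset (Fin n))),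
            (if (PermLE σ lam ∧ PermLE lam π ∧ ¬(k = n ∧ HEq lam π))
                ∧ (S ≠ Finset.univ ∧ PermLE lam (red π S)) then
              mu σ lam * mobHat (AstarP (red π S) lam) else 0) := by
            apply Finset.sum_congr rfl
            intro k hk
            apply Finset.sum_congr rfl
            intro lam _
            exact hstep1 k hk lam
        _ = ∑ S ∈ (Finset.univ : Finset (Finset (Fin n))),
            ∑ k ∈ Finset.range (n + 1), ∑ lam : Equiv.Perm (Fin k),
            (if (PermLE σ lam ∧ PermLE lam π ∧ ¬(k = n ∧ HEq lam π))
                ∧ (S ≠ Finset.univ ∧ PermLE lam (red π S)) then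
              mu σ lam * mobHat (AstarP (red π S) lam) else 0) := by
            rw [Finset.sum_congr rfl (fun k _ => Finset.sum_comm)]
            exact Finset.sum_comm
        _ = ∑ S ∈ (Finset.univ : Finset (Finset (Fin n))),
            (if S ≠ Finset.univ then
              (∑ k ∈ Finset.range (n+1), ∑ lam : Equiv.Perm (Fin k),
                (if PermLE σ lam ∧ PermLE lam (red π S) then
                  mu σ lam * mobHat (AstarP (red π S) lam) else 0)) else 0) := by
            apply Finset.sum_congr rfl
            intro S _
            by_cases hS : S ≠ Finset.univ
            · rw [if_pos hS]
              apply Finset.sum_congr rfl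
              intro k _
              apply Finset.sum_congr rfl
              intro lam _
              apply if_congr _ rfl rfl
              constructor
              · rintro ⟨⟨h1, -, -⟩, -, h5⟩
                exact ⟨h1, h5⟩
              · rintro ⟨h1, h5⟩
                have hclt : S.card < n := by
                  have := Finset.card_lt_card (Finset.ssubset_univ_iff.mpr hS)
                  simpa using this
                refine ⟨⟨h1, permLE_trans h5 (red_permLE π S), ?_⟩, hS, h5⟩
                rintro ⟨rfl, -⟩
                have := permLE_card_le h5
                omega
            · rw [if_neg hS]
              apply Finset.sum_eq_zero
              intro k _
              apply Finset.sum_eq_zero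
              intro lam _
              exact if_neg (fun hh => hS hh.2.1)
        _ = ∑ S ∈ Finset.univ.filter (fun S : Finset (Fin n) => S ≠ Finset.univ),
            (∑ k ∈ Finset.range (n+1), ∑ lam : Equiv.Perm (Fin k),
              (if PermLE σ lam ∧ PermLE lam (red π S) then
                mu σ lam * mobHat (AstarP (red π S) lam) else 0)) :=
            (Finset.sum_filter _ _).symm
        _ = ∑ S ∈ Finset.univ.filter (fun S : Finset (Fin n) => S ≠ Finset.univ),
            (-((-1:ℤ)^(S.card - m) * (permE σ (red π S) : ℤ))) := by
            apply Finset.sum_congr rfl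
            intro S hSf
            simp only [Finset.mem_filter, Finset.mem_univ, true_and] at hSf
            exact hInner S hSf
    -- Final combination
    have hfin := sum_alt_emb σ π hmlt
    rw [hsplit]
    rw [Finset.sum_congr rfl (fun k _ => Finset.sum_neg_distrib _),
      Finset.sum_neg_distrib, hP1]
    rw [Finset.sum_congr rfl (fun k _ => Finset.sum_neg_distrib _),
      Finset.sum_neg_distrib, hP2]
    rw [Finset.sum_neg_distrib]
    omega

end MainTheorem

/-- For permutations `σ < π` in the classical permutation pattern order,
`μ(σ,π) = (−1)^{n−m} E(σ,π) + ∑_{σ ≤ λ < π} μ(σ,λ) · μ(0̂,1̂ in Â*(λ,π))`.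
The Möbius function `mu` of the pattern order is characterised by its defining
recurrence: `mu τ τ = 1` and, for `τ < ρ`, the sum of `mu τ ·` over the interval
`[τ,ρ]` vanishes. -/
theorem stmt2 {m n : ℕ} (σ : Equiv.Perm (Fin m)) (π : Equiv.Perm (Fin n))
    (mu : ∀ {a b : ℕ}, Equiv.Perm (Fin a) → Equiv.Perm (Fin b) → ℤ)
    (hmu_self : ∀ {a : ℕ} (τ : Equiv.Perm (Fin a)), mu τ τ = 1)
    (hmu_rec : ∀ {a b : ℕ} (τ : Equiv.Perm (Fin a)) (ρ : Equiv.Perm (Fin b)),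
      PermLT τ ρ →
      ∑ k ∈ Finset.range (b + 1), ∑ lam : Equiv.Perm (Fin k),
        (if PermLE τ lam ∧ PermLE lam ρ then mu τ lam else 0) = 0)
    (h : PermLT σ π) :
    mu σ π = (-1) ^ (n - m) * (permE σ π : ℤ) +
      ∑ k ∈ Finset.range (n + 1), ∑ lam : Equiv.Perm (Fin k),
        (if PermLE σ lam ∧ PermLE lam π ∧ ¬(k = n ∧ HEq lam π) then
          mu σ lam * mobHat (AstarP π lam) else 0) := by
  exact main_key (mu := @mu) hmu_self hmu_rec n π m σ h
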